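/- For every σ ∈ (0,1], F(σ) = τ(σ), where F is defined by the recurrence F(σ) = 1/2 for σ ≥ 1/4 and F(σ) = β + max{α·F(σ/α), (1-α)·F(σ/(1-α))} for σ < 1/4, with α = 1 - τ(σ) and β = α - σ. -/

import Mathlib

/-- The "magic sequence" ρ_ℓ = 1 + ℓ(ℓ+1)/2, as a real number. -/
noncomputable def rho (l : ℕ) : ℝ := 1 + (l : ℝ) * ((l : ℝ) + 1) / 2

/-- `IsTau tau` expresses that `tau` is the tradeoff function of Dinur et al.:
`tau σ = 1/2` for `σ > 1/2`, and `tau σ = 1 - 1/(ℓ+1) - σ(ρ_ℓ-2)/(ℓ+1)`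
where `ℓ ≥ 1` is the unique integer with `1/ρ_{ℓ+1} < σ ≤ 1/ρ_ℓ`. -/
def IsTau (tau : ℝ → ℝ) : Prop :=
  (∀ σ : ℝ, 1 / 2 < σ → σ ≤ 1 → tau σ = 1 / 2) ∧
  (∀ σ : ℝ, 0 < σ → σ ≤ 1 / 2 → ∀ l : ℕ, 1 ≤ l →
    1 / rho (l + 1) < σ → σ ≤ 1 / rho l →
    tau σ = 1 - 1 / ((l : ℝ) + 1) - σ * (rho l - 2) / ((l : ℝ) + 1))

/-- `IsF tau F` expresses the recurrence defining `F`: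
`F σ = 1/2` for `σ ≥ 1/4`, and for `σ < 1/4`, with `α = 1 - tau σ` and
`β = α - σ`, `F σ = β + max (α·F(σ/α)) ((1-α)·F(σ/(1-α)))`. -/
def IsF (tau F : ℝ → ℝ) : Prop :=
  (∀ σ : ℝ, 1 / 4 ≤ σ → σ ≤ 1 → F σ = 1 / 2) ∧
  (∀ σ : ℝ, 0 < σ → σ < 1 / 4 →
    F σ = ((1 - tau σ) - σ) +
      max ((1 - tau σ) * F (σ / (1 - tau σ)))
          ((1 - (1 - tau σ)) * F (σ / (1 - (1 - tau σ)))))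

lemma rho_pos (l : ℕ) : 0 < rho l := by
  unfold rho
  have h0 : (0:ℝ) ≤ (l:ℝ) := Nat.cast_nonneg l
  nlinarith

lemma rho_mono {l m : ℕ} (h : l ≤ m) : rho l ≤ rho m := by
  unfold rho
  have hc : (l : ℝ) ≤ (m : ℝ) := Nat.cast_le.2 h
  have h0 : (0:ℝ) ≤ (l:ℝ) := Nat.cast_nonneg l
  nlinarith

lemma rho_ge_self (l : ℕ) : (l : ℝ) ≤ rho l := by
  unfold rho
  have h0 : (0:ℝ) ≤ (l:ℝ) := Nat.cast_nonneg l
  nlinarith [sq_nonneg ((l:ℝ) - 1)]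

lemma rho_one : rho 1 = 2 := by norm_num [rho]
lemma rho_two : rho 2 = 4 := by norm_num [rho]
lemma rho_three : rho 3 = 7 := by norm_num [rho]

/-- every `x ∈ (0,1/2]` lies in some interval `(1/ρ_{m+1}, 1/ρ_m]` with `m ≥ 1`. -/
lemma exists_interval (x : ℝ) (hx0 : 0 < x) (hx : x ≤ 1/2) :
    ∃ m : ℕ, 1 ≤ m ∧ 1 / rho (m+1) < x ∧ x ≤ 1 / rho m := by
  have hex : ∃ k : ℕ, 1 / rho k < x := by
    obtain ⟨k, hk⟩ := exists_nat_gt (1/x)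
    refine ⟨k, ?_⟩
    have hkx : 1/x < rho k := lt_of_lt_of_le hk (rho_ge_self k)
    have h1 : 1 < x * rho k := by
      have := (div_lt_iff₀ hx0).1 hkx
      nlinarith
    rw [div_lt_iff₀ (rho_pos k)]
    nlinarith
  have hspec := Nat.find_spec hex
  have h2 : 2 ≤ Nat.find hex := by
    by_contra hlt
    push_neg at hlt
    have hor : Nat.find hex = 0 ∨ Nat.find hex = 1 := by omega
    rcases hor with h0' | h1'
    · rw [h0'] at hspec; norm_num [rho] at hspec; linarith
    · rw [h1'] at hspec; rw [rho_one] at hspec; linarith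
  refine ⟨Nat.find hex - 1, by omega, ?_, ?_⟩
  · have he : Nat.find hex - 1 + 1 = Nat.find hex := by omega
    rw [he]; exact hspec
  · have := Nat.find_min hex (m := Nat.find hex - 1) (by omega)
    exact le_of_not_gt this

set_option maxHeartbeats 1000000 in
/-- The key inequality: for any `m ≥ 1`, the left branch of the max is
dominated: `α·L_m(σ/α) ≤ 1 - 2α + σ`. -/
lemma key_ineq (n m : ℕ) (hm : 1 ≤ m) (x : ℝ) (hx0 : 0 < x)
    (hxR : x * rho (n+2) ≤ 1) :
    (1 + x * (rho (n+2) - 2)) / ((n:ℝ) + 3) *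
      (1 - 1/((m:ℝ)+1) -
        x / ((1 + x * (rho (n+2) - 2)) / ((n:ℝ) + 3)) * (rho m - 2) / ((m:ℝ)+1))
      ≤ 1 - 2 * ((1 + x * (rho (n+2) - 2)) / ((n:ℝ) + 3)) + x := by
  have hN : (0:ℝ) ≤ (n:ℝ) := Nat.cast_nonneg n
  have hM : (1:ℝ) ≤ (m:ℝ) := by exact_mod_cast hm
  have hM0 : (0:ℝ) ≤ (m:ℝ) := by linarith
  have hR : rho (n+2) = 1 + ((n:ℝ)+2)*((n:ℝ)+3)/2 := by unfold rho; push_cast; ring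
  have hRm : rho m = 1 + (m:ℝ)*((m:ℝ)+1)/2 := rfl
  have hnum : (0:ℝ) < 1 + x * (rho (n+2) - 2) := by
    rw [hR]
    nlinarith [mul_nonneg hx0.le hN, mul_nonneg (mul_nonneg hx0.le hN) hN]
  have hden : (0:ℝ) < (n:ℝ)+3 := by linarith
  have hMden : (0:ℝ) < (m:ℝ)+1 := by linarith
  have hapos : (0:ℝ) < (1 + x * (rho (n+2) - 2)) / ((n:ℝ) + 3) := div_pos hnum hden
  have hane : (1 + x * (rho (n+2) - 2)) / ((n:ℝ) + 3) ≠ 0 := ne_of_gt hapos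
  have hsplit : (1 + x * (rho (n+2) - 2)) / ((n:ℝ) + 3) *
      (1 - 1/((m:ℝ)+1) -
        x / ((1 + x * (rho (n+2) - 2)) / ((n:ℝ) + 3)) * (rho m - 2) / ((m:ℝ)+1)) =
      (1 + x * (rho (n+2) - 2)) / ((n:ℝ) + 3) * (1 - 1/((m:ℝ)+1))
        - x * (rho m - 2) / ((m:ℝ)+1) := by
    field_simp
  rw [hsplit]
  have hA : (0:ℝ) ≤ (n:ℝ)*(m:ℝ) + (n:ℝ) + 1 := by
    nlinarith [mul_nonneg hN hM0]
  have hq : (0:ℝ) ≤ (n:ℝ)^3 + 2*(n:ℝ)^2 - 2*(n:ℝ) + 3 := by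
    nlinarith [mul_nonneg hN (sq_nonneg ((n:ℝ)-1)), sq_nonneg ((n:ℝ)-1), sq_nonneg (n:ℝ)]
  have hP : (0:ℝ) ≤ ((n:ℝ)*(m:ℝ) + (n:ℝ) + 1) * rho (n+2) +
      (((n:ℝ)+3)*(m:ℝ)*((m:ℝ)+3) - (3*(m:ℝ)+2)*((n:ℝ)+4)*((n:ℝ)+1))/2 := by
    rw [hR]
    nlinarith [mul_nonneg (sub_nonneg.2 hM) hq,
      mul_nonneg (mul_nonneg (sub_nonneg.2 hM) (sub_nonneg.2 hM)) hN,
      sq_nonneg ((m:ℝ)-1), mul_nonneg (mul_nonneg hN hN) hN, sq_nonneg (n:ℝ), hN]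
  have hAB : (0:ℝ) ≤ ((n:ℝ)*(m:ℝ) + (n:ℝ) + 1) +
      x * ((((n:ℝ)+3)*(m:ℝ)*((m:ℝ)+3) - (3*(m:ℝ)+2)*((n:ℝ)+4)*((n:ℝ)+1))/2) := by
    nlinarith [mul_nonneg hx0.le hP, mul_nonneg hA (sub_nonneg.2 hxR)]
  have hdenpos : (0:ℝ) < ((m:ℝ)+1)*((n:ℝ)+3) := by positivity
  have hdiff : 1 - 2 * ((1 + x * (rho (n+2) - 2)) / ((n:ℝ) + 3)) + x -
      ((1 + x * (rho (n+2) - 2)) / ((n:ℝ) + 3) * (1 - 1/((m:ℝ)+1))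
        - x * (rho m - 2) / ((m:ℝ)+1)) =
      (((n:ℝ)*(m:ℝ) + (n:ℝ) + 1) +
        x * ((((n:ℝ)+3)*(m:ℝ)*((m:ℝ)+3) - (3*(m:ℝ)+2)*((n:ℝ)+4)*((n:ℝ)+1))/2))
        / (((m:ℝ)+1)*((n:ℝ)+3)) := by
    rw [hR, hRm]
    field_simp
    ring
  have hfin := div_nonneg hAB hdenpos.le
  linarith [hdiff ▸ hfin]

set_option maxHeartbeats 1000000 in
theorem F_eq_tau (tau F : ℝ → ℝ) (htau : IsTau tau) (hF : IsF tau F)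
    (σ : ℝ) (h0 : 0 < σ) (h1 : σ ≤ 1) : F σ = tau σ := by
  obtain ⟨htau1, htau2⟩ := htau
  obtain ⟨hF1, hF2⟩ := hF
  suffices key : ∀ n : ℕ, ∀ x : ℝ, 0 < x → x ≤ 1 → 1 / rho (n+2) < x → F x = tau x by
    obtain ⟨k, hk⟩ := exists_nat_gt (1/σ)
    refine key k σ h0 h1 ?_
    have hkk : (1:ℝ)/σ < rho (k+2) := by
      calc (1:ℝ)/σ < k := hk
      _ ≤ ((k+2 : ℕ) : ℝ) := by push_cast; linarith
      _ ≤ rho (k+2) := rho_ge_self (k+2)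
    rw [div_lt_iff₀ (rho_pos (k+2))]
    have := (div_lt_iff₀ h0).1 hkk
    nlinarith
  intro n
  induction n with
  | zero =>
    intro x hx0 hx1 hxgt
    rw [rho_two] at hxgt
    have hFx : F x = 1/2 := hF1 x (le_of_lt hxgt) hx1
    rcases le_or_gt x (1/2) with hle | hgt
    · have ht := htau2 x hx0 hle 1 le_rfl
        (by rw [show (1+1 : ℕ) = 2 from rfl, rho_two]; exact hxgt)
        (by rw [rho_one]; exact hle)
      rw [hFx, ht, rho_one]
      norm_num
    · rw [hFx, htau1 x hgt hx1]
  | succ n ih =>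
    intro x hx0 hx1 hxgt
    by_cases hcut : 1 / rho (n+2) < x
    · exact ih x hx0 hx1 hcut
    have hxle : x ≤ 1 / rho (n+2) := le_of_not_gt hcut
    have hxgt3 : 1 / rho (n+3) < x := by
      rwa [show n+1+2 = n+3 from by omega] at hxgt
    have hR2pos := rho_pos (n+2)
    have hR1pos := rho_pos (n+1)
    have hR3pos := rho_pos (n+3)
    have hR2def : rho (n+2) = 1 + ((n:ℝ)+2)*((n:ℝ)+3)/2 := by unfold rho; push_cast; ring
    have hR1def : rho (n+1) = 1 + ((n:ℝ)+1)*((n:ℝ)+2)/2 := by unfold rho; push_cast; ring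
    have hR3def : rho (n+3) = 1 + ((n:ℝ)+3)*((n:ℝ)+4)/2 := by unfold rho; push_cast; ring
    have hN : (0:ℝ) ≤ (n:ℝ) := Nat.cast_nonneg n
    have hden : (0:ℝ) < (n:ℝ)+3 := by linarith
    have hR2four : (4:ℝ) ≤ rho (n+2) := by rw [← rho_two]; exact rho_mono (by omega)
    have hxR2 : x * rho (n+2) ≤ 1 := by
      rw [le_div_iff₀ hR2pos] at hxle; exact hxle
    have hxR3 : 1 < x * rho (n+3) := by
      rw [div_lt_iff₀ hR3pos] at hxgt3
      linarith
    have pxR2 : x * (1 + ((n:ℝ)+2)*((n:ℝ)+3)/2) ≤ 1 := by rw [← hR2def]; exact hxR2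
    have pxR3 : 1 < x * (1 + ((n:ℝ)+3)*((n:ℝ)+4)/2) := by rw [← hR3def]; exact hxR3
    have hx14 : x ≤ 1/4 := by
      nlinarith only [pxR2, hx0, hN, mul_nonneg hx0.le hN,
        mul_nonneg (mul_nonneg hx0.le hN) hN]
    by_cases h4 : x < 1/4
    · -- main case
      have hxhalf : x ≤ 1/2 := by linarith only [h4]
      have htx : tau x = 1 - 1/((n:ℝ)+3) - x * (rho (n+2) - 2)/((n:ℝ)+3) := by
        have ht := htau2 x hx0 hxhalf (n+2) (by omega)
          (by rw [show n+2+1 = n+3 from by omega]; exact hxgt3) hxle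
        rw [ht]; push_cast; ring
      set a : ℝ := (1 + x * (rho (n+2) - 2)) / ((n:ℝ) + 3) with hadef
      have hnum : (0:ℝ) < 1 + x * (rho (n+2) - 2) := by
        have h2 : (0:ℝ) < rho (n+2) - 2 := by linarith only [hR2four]
        linarith only [mul_pos hx0 h2]
      have hapos : 0 < a := div_pos hnum hden
      have haval : a * ((n:ℝ)+3) = 1 + x * (rho (n+2) - 2) := by
        rw [hadef]; field_simp
      have hxR2' : x * (rho (n+2) - 2) < 1 := by nlinarith only [hxR2, hx0]
      have ha1 : a < 1 := by
        rw [hadef, div_lt_one hden]; linarith only [hxR2', hN]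
      have h1a : 0 < 1 - a := by linarith only [ha1]
      have h1aval : (1 - a) * ((n:ℝ)+3) = ((n:ℝ)+2) - x * (rho (n+2) - 2) := by
        have : (1 - a) * ((n:ℝ)+3) = ((n:ℝ)+3) - a * ((n:ℝ)+3) := by ring
        rw [this, haval]; ring
      have hta : tau x = 1 - a := by
        rw [htx, hadef]; field_simp; ring
      have h1t : 1 - tau x = a := by rw [hta]; ring
      have hrec := hF2 x hx0 h4
      rw [h1t] at hrec
      -- σ2 = x/(1-a)
      have hs2pos : 0 < x/(1-a) := div_pos hx0 h1a
      have hs2le : x/(1-a) ≤ 1/rho (n+1) := by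
        rw [div_le_div_iff₀ h1a hR1pos, one_mul]
        have hmul : x * rho (n+1) * ((n:ℝ)+3) ≤ (1-a) * ((n:ℝ)+3) := by
          rw [h1aval, hR1def, hR2def]
          nlinarith only [pxR2, hx0, mul_nonneg hN (sub_nonneg.2 pxR2)]
        exact le_of_mul_le_mul_right hmul hden
      have hs2gt : 1/rho (n+2) < x/(1-a) := by
        rw [div_lt_div_iff₀ hR2pos h1a, one_mul]
        have hmul : (1-a) * ((n:ℝ)+3) < x * rho (n+2) * ((n:ℝ)+3) := by
          rw [h1aval, hR2def]
          nlinarith only [pxR3, hx0, mul_nonneg hN (sub_nonneg.2 pxR3.le)]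
        exact lt_of_mul_lt_mul_right hmul hden.le
      have hR1two : (2:ℝ) ≤ rho (n+1) := by rw [← rho_one]; exact rho_mono (by omega)
      have hs2half : x/(1-a) ≤ 1/2 :=
        le_trans hs2le (one_div_le_one_div_of_le (by norm_num) hR1two)
      have hs2one : x/(1-a) ≤ 1 := by linarith only [hs2half]
      have hFs2 : F (x/(1-a)) = tau (x/(1-a)) := ih _ hs2pos hs2one hs2gt
      have hts2 : tau (x/(1-a)) =
          1 - 1/((n:ℝ)+2) - (x/(1-a)) * (rho (n+1) - 2)/((n:ℝ)+2) := by
        have ht := htau2 (x/(1-a)) hs2pos hs2half (n+1) (by omega)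
          (by rw [show n+1+1 = n+2 from by omega]; exact hs2gt) hs2le
        rw [ht]; push_cast; ring
      have hden2 : (0:ℝ) < (n:ℝ)+2 := by linarith only [hN]
      have hkeyeq : (1-a) * tau (x/(1-a)) = 1 - 2*a + x := by
        rw [hts2]
        have hexp : (1-a) * (1 - 1/((n:ℝ)+2) - (x/(1-a)) * (rho (n+1) - 2)/((n:ℝ)+2)) =
            (1-a) * (1 - 1/((n:ℝ)+2)) - x * (rho (n+1) - 2)/((n:ℝ)+2) := by
          field_simp
        rw [hexp, hadef, hR1def, hR2def]
        field_simp
        ring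
      -- σ1 = x/a
      have hs1pos : 0 < x/a := div_pos hx0 hapos
      have hs1le1 : x/a ≤ 1 := by
        rw [div_le_one hapos]
        have hmul : x * ((n:ℝ)+3) ≤ a * ((n:ℝ)+3) := by
          rw [haval, hR2def]
          nlinarith only [h4, hx0, mul_nonneg hx0.le hN,
            mul_nonneg (mul_nonneg hx0.le hN) hN]
        exact le_of_mul_le_mul_right hmul hden
      have hs1gt : 1/rho (n+2) < x/a := by
        rw [div_lt_div_iff₀ hR2pos hapos, one_mul]
        have hcoef3 : (0:ℝ) ≤ ((n:ℝ)+2) * (1 + ((n:ℝ)+2)*((n:ℝ)+3)/2) + 2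
            - (1 + ((n:ℝ)+3)*((n:ℝ)+4)/2) := by
          nlinarith only [mul_nonneg (mul_nonneg hN hN) hN, mul_nonneg hN hN, hN]
        have hmul : a * ((n:ℝ)+3) < x * rho (n+2) * ((n:ℝ)+3) := by
          rw [haval, hR2def]
          nlinarith only [pxR3, hx0, mul_nonneg hx0.le hcoef3]
        exact lt_of_mul_lt_mul_right hmul hden.le
      have hFs1 : F (x/a) = tau (x/a) := ih _ hs1pos hs1le1 hs1gt
      -- value of tau at x/a: some line L_m with m ≥ 1
      obtain ⟨m, hm1, htaub⟩ : ∃ m : ℕ, 1 ≤ m ∧ tau (x/a) =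
          1 - 1/((m:ℝ)+1) - (x/a) * (rho m - 2)/((m:ℝ)+1) := by
        rcases le_or_gt (x/a) (1/2) with hle | hgt
        · obtain ⟨m, hm1, h2, h3⟩ := exists_interval _ hs1pos hle
          exact ⟨m, hm1, htau2 _ hs1pos hle m hm1 h2 h3⟩
        · refine ⟨1, le_rfl, ?_⟩
          rw [htau1 _ hgt hs1le1, rho_one]
          norm_num
      have hb : a * tau (x/a) ≤ 1 - 2*a + x := by
        rw [htaub, hadef]
        exact key_ineq n m hm1 x hx0 hxR2
      have hmax : max (a * F (x/a)) ((1-a) * F (x/(1-a))) = 1 - 2*a + x := by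
        rw [hFs1, hFs2, hkeyeq]
        exact max_eq_right hb
      rw [hrec, hmax, hta]
      ring
    · -- boundary: x = 1/4
      have hx4 : x = 1/4 := le_antisymm hx14 (not_lt.1 h4)
      have hn0 : n = 0 := by
        by_contra hne
        have h7 : (7:ℝ) ≤ rho (n+2) := by
          rw [← rho_three]; exact rho_mono (by omega)
        rw [hx4] at hxR2
        linarith only [hxR2, h7]
      subst hn0
      have hFx : F x = 1/2 := hF1 x (le_of_eq hx4.symm) hx1
      have ht := htau2 x hx0 (by rw [hx4]; norm_num) 2 (by omega)
        (by rw [show (2+1 : ℕ) = 3 from rfl, rho_three, hx4]; norm_num)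
        (by rw [rho_two, hx4])
      rw [hFx, ht, rho_two, hx4]
      norm_num
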